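/- Let K be an algebraically closed field of characteristic 0 and let n_1,…,n_k, d_1,…,d_k be positive integers. Set r = min_i ⌈(d_i+2)/2⌉ and J = {i : ⌈(d_i+2)/2⌉ = r}, and assume r ≥ 3. Let S be a set of r distinct points of ℙ^{n_1}×⋯×ℙ^{n_k}. If there exist two distinct indices i, ℓ ∈ J such that π_i(S) contains at least 2 distinct points of ℙ^{n_i} and π_ℓ(S) contains at least 2 distinct points of ℙ^{n_ℓ}, then the double points 2S impose independent conditions in multidegree (d_1,…,d_k). (Equivalently, ν(S) ∉ Ter_r(SV^{d_1,…,d_k}_{n_1×⋯×n_k}).) -/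

import Mathlib

open MvPolynomial

/-- Multihomogeneous polynomials of multidegree `d` in the blocks of variables
`x_{i,0}, …, x_{i,n i}` (`i : Fin k`), all of whose first-order partial derivatives vanish at
every point of the family `p` of points of `ℙ^{n 1} × ⋯ × ℙ^{n k}`. -/
noncomputable def svDblVanish (K : Type) [Field K] (k : ℕ) (n d : Fin k → ℕ) {ι : Type}
    (p : ι → (i : Fin k) → (Fin (n i + 1) → K)) :
    Submodule K (MvPolynomial ((i : Fin k) × Fin (n i + 1)) K) :=
  weightedHomogeneousSubmodule K (fun v => Pi.single v.1 1) d ⊓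
    ⨅ (a : ι) (v : (i : Fin k) × Fin (n i + 1)),
      LinearMap.ker
        ((aeval fun w : (i : Fin k) × Fin (n i + 1) => p a w.1 w.2).toLinearMap
          ∘ₗ (pderiv v).toLinearMap)

namespace SV2P

variable {K : Type} [Field K] {k : ℕ} {n : Fin k → ℕ} {r : ℕ}



/-- The weight function for multihomogeneity. -/
def wt (k : ℕ) (n : Fin k → ℕ) : ((i : Fin k) × Fin (n i + 1)) → (Fin k → ℕ) :=
  fun v => Pi.single v.1 1

/-- A linear form in the block `j` of variables with coefficients `u`. -/
noncomputable def linF (j : Fin k) (u : Fin (n j + 1) → K) :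
    MvPolynomial ((i : Fin k) × Fin (n i + 1)) K :=
  ∑ t, MvPolynomial.C (u t) * MvPolynomial.X ⟨j, t⟩

theorem aeval_linF (P : ((i : Fin k) × Fin (n i + 1)) → K) (j : Fin k) (u : Fin (n j + 1) → K) :
    aeval P (linF j u) = ∑ t, u t * P ⟨j, t⟩ := by
  simp [linF]

theorem pderiv_linF_same (j : Fin k) (u : Fin (n j + 1) → K) (t : Fin (n j + 1)) :
    pderiv (⟨j, t⟩ : (i : Fin k) × Fin (n i + 1)) (linF j u) = C (u t) := by
  classical
  rw [linF, map_sum]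
  rw [Finset.sum_eq_single t]
  · rw [pderiv_mul, pderiv_C, pderiv_X_self]; ring
  · intro s _ hs
    rw [pderiv_mul, pderiv_C, pderiv_X_of_ne]
    · ring
    · simp [hs]
  · simp

theorem pderiv_linF_ne (j : Fin k) (u : Fin (n j + 1) → K)
    (v : (i : Fin k) × Fin (n i + 1)) (hv : v.1 ≠ j) :
    pderiv v (linF j u) = 0 := by
  classical
  rw [linF, map_sum, Finset.sum_eq_zero]
  intro s _
  rw [pderiv_mul, pderiv_C, pderiv_X_of_ne]
  · ring
  · intro h
    exact hv (congrArg Sigma.fst h).symm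

theorem linF_mem (j : Fin k) (u : Fin (n j + 1) → K) :
    linF j u ∈ weightedHomogeneousSubmodule K (wt k n) (Pi.single j 1) := by
  refine Submodule.sum_mem _ fun t _ => ?_
  rw [mem_weightedHomogeneousSubmodule]
  have : C (u t) * X (⟨j, t⟩ : (i : Fin k) × Fin (n i + 1)) =
      monomial (Finsupp.single ⟨j, t⟩ 1) (u t) := by
    rw [X, C_mul_monomial, mul_one]
  rw [this]
  apply isWeightedHomogeneous_monomial
  rw [Finsupp.weight_apply, Finsupp.sum_single_index] <;> simp [wt]

theorem aeval_sq_mul {P : ((i : Fin k) × Fin (n i + 1)) → K}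
    {L R : MvPolynomial ((i : Fin k) × Fin (n i + 1)) K} (hL : aeval P L = 0) :
    aeval P (L ^ 2 * R) = 0 := by
  rw [map_mul, map_pow, hL]
  ring

theorem aeval_pderiv_sq_mul {P : ((i : Fin k) × Fin (n i + 1)) → K}
    {L R : MvPolynomial ((i : Fin k) × Fin (n i + 1)) K} (hL : aeval P L = 0)
    (v : (i : Fin k) × Fin (n i + 1)) :
    aeval P (pderiv v (L ^ 2 * R)) = 0 := by
  have h2 : L ^ 2 * R = L * (L * R) := by ring
  rw [h2, pderiv_mul, pderiv_mul]
  simp only [map_add, map_mul, hL]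
  ring

theorem aeval_pderiv_mul_right {P : ((i : Fin k) × Fin (n i + 1)) → K}
    {G M : MvPolynomial ((i : Fin k) × Fin (n i + 1)) K} (hM : aeval P M = 0)
    (v : (i : Fin k) × Fin (n i + 1)) :
    aeval P (pderiv v (G * M)) = aeval P G * aeval P (pderiv v M) := by
  rw [pderiv_mul, map_add, map_mul, map_mul, hM]
  ring


theorem weight_apply_blockDeg (μ : ((i : Fin k) × Fin (n i + 1)) →₀ ℕ) (j : Fin k) :
    Finsupp.weight (wt k n) μ j = ∑ t, μ ⟨j, t⟩ := by
  classical
  have h1 : Finsupp.weight (wt k n) μ j = ∑ v ∈ μ.support, (if j = v.1 then μ v else 0) := by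
    rw [Finsupp.weight_apply, Finsupp.sum, Finset.sum_apply]
    refine Finset.sum_congr rfl fun v _ => ?_
    simp [wt, Pi.single_apply]
  rw [h1, Finset.sum_subset (Finset.subset_univ μ.support)
    (by intro v _ hv; simp [Finsupp.notMem_support_iff.mp hv])]
  rw [← Finset.univ_sigma_univ, Finset.sum_sigma]
  refine (Finset.sum_eq_single j (fun i _ hij => Finset.sum_eq_zero fun t _ => ?_)
    (fun h => absurd (Finset.mem_univ j) h)).trans ?_
  · rw [if_neg (fun h => hij h.symm)]
  · simp

theorem euler_monomial (j : Fin k) (μ : ((i : Fin k) × Fin (n i + 1)) →₀ ℕ) (c : K) :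
    ∑ t, X (⟨j, t⟩ : (i : Fin k) × Fin (n i + 1)) * pderiv ⟨j, t⟩ (monomial μ c)
      = (∑ t, μ ⟨j, t⟩) • monomial μ c := by
  classical
  rw [Finset.sum_smul]
  refine Finset.sum_congr rfl fun t _ => ?_
  rw [pderiv_monomial]
  by_cases h : μ ⟨j, t⟩ = 0
  · simp [h]
  · rw [X, monomial_mul, one_mul]
    have hle : Finsupp.single (⟨j, t⟩ : (i : Fin k) × Fin (n i + 1)) 1 ≤ μ :=
      Finsupp.single_le_iff.mpr (Nat.one_le_iff_ne_zero.mpr h)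
    rw [add_tsub_cancel_of_le hle]
    rw [smul_monomial]
    congr 1
    rw [nsmul_eq_mul, mul_comm]

theorem euler {D : Fin k → ℕ} {F : MvPolynomial ((i : Fin k) × Fin (n i + 1)) K}
    (hF : F ∈ weightedHomogeneousSubmodule K (wt k n) D) (j : Fin k) :
    ∑ t, X (⟨j, t⟩ : (i : Fin k) × Fin (n i + 1)) * pderiv ⟨j, t⟩ F = D j • F := by
  classical
  conv_lhs => rw [F.as_sum]
  conv_rhs => rw [F.as_sum]
  rw [Finset.smul_sum]
  simp only [map_sum, Finset.mul_sum]
  rw [Finset.sum_comm]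
  refine Finset.sum_congr rfl fun μ hμ => ?_
  rw [euler_monomial]
  congr 1
  rw [← weight_apply_blockDeg]
  rw [mem_weightedHomogeneousSubmodule] at hF
  rw [hF (mem_support_iff.mp hμ)]

theorem euler_aeval {D : Fin k → ℕ} {F : MvPolynomial ((i : Fin k) × Fin (n i + 1)) K}
    (hF : F ∈ weightedHomogeneousSubmodule K (wt k n) D) (j : Fin k)
    (P : ((i : Fin k) × Fin (n i + 1)) → K) :
    ∑ t, P ⟨j, t⟩ * aeval P (pderiv ⟨j, t⟩ F) = (D j : K) * aeval P F := by
  have h := congrArg (aeval P) (euler hF j)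
  rw [map_sum, map_nsmul] at h
  simp only [map_mul, aeval_X] at h
  rw [h, nsmul_eq_mul]


/-- The set of exponents of multidegree `d`, as an equiv with a product of `Sym`s. -/
noncomputable def blockEquiv (d : Fin k → ℕ) :
    ↥{μ : ((i : Fin k) × Fin (n i + 1)) →₀ ℕ | Finsupp.weight (wt k n) μ = d} ≃
      ((i : Fin k) → Sym (Fin (n i + 1)) (d i)) := by
  refine (Equiv.subtypeEquiv Finsupp.sigmaFinsuppEquivPiFinsupp (fun μ => ?_)).trans
    (Equiv.subtypePiEquivPi.trans (Equiv.piCongrRight fun i => (Sym.equivNatSum _ _).symm))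
  constructor
  · intro h i
    rw [Finsupp.sum_fintype _ _ (fun _ => rfl)]
    simp only [Finsupp.sigmaFinsuppEquivPiFinsupp_apply, id_eq]
    rw [← weight_apply_blockDeg, h]
  · intro h
    funext j
    rw [weight_apply_blockDeg]
    have := h j
    rw [Finsupp.sum_fintype _ _ (fun _ => rfl)] at this
    simpa only [Finsupp.sigmaFinsuppEquivPiFinsupp_apply, id_eq] using this

noncomputable instance whFintype (d : Fin k → ℕ) :
    Fintype ↥{μ : ((i : Fin k) × Fin (n i + 1)) →₀ ℕ | Finsupp.weight (wt k n) μ = d} :=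
  Fintype.ofEquiv _ (blockEquiv d).symm

theorem card_wh (d : Fin k → ℕ) :
    Fintype.card ↥{μ : ((i : Fin k) × Fin (n i + 1)) →₀ ℕ | Finsupp.weight (wt k n) μ = d}
      = ∏ i, (n i + d i).choose (n i) := by
  rw [Fintype.card_congr (blockEquiv d), Fintype.card_pi]
  refine Finset.prod_congr rfl fun i _ => ?_
  rw [Sym.card_sym_eq_choose, Fintype.card_fin]
  have h1 : n i + 1 + d i - 1 = n i + d i := by omega
  have h3 := Nat.choose_symm (show d i ≤ n i + d i by omega)
  rw [show n i + d i - d i = n i by omega] at h3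
  rw [h1, ← h3]

theorem wh_eq_restrict (d : Fin k → ℕ) :
    weightedHomogeneousSubmodule K (wt k n) d =
      restrictSupport K {μ | Finsupp.weight (wt k n) μ = d} :=
  weightedHomogeneousSubmodule_eq_finsupp_supported K _ _

noncomputable instance whFD (d : Fin k → ℕ) :
    FiniteDimensional K (restrictSupport K {μ : ((i : Fin k) × Fin (n i + 1)) →₀ ℕ |
      Finsupp.weight (wt k n) μ = d} : Submodule K (MvPolynomial ((i : Fin k) × Fin (n i + 1)) K)) :=
  Module.Finite.of_basis (basisRestrictSupport K _)

theorem finrank_wh (d : Fin k → ℕ) :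
    Module.finrank K (restrictSupport K {μ : ((i : Fin k) × Fin (n i + 1)) →₀ ℕ |
        Finsupp.weight (wt k n) μ = d} : Submodule K (MvPolynomial ((i : Fin k) × Fin (n i + 1)) K))
      = ∏ i, (n i + d i).choose (n i) := by
  rw [Module.finrank_eq_card_basis (basisRestrictSupport K _)]
  exact card_wh d


theorem exists_dual_sep {m : ℕ} (x y : Fin m → K) (hy : y ≠ 0) (h : ∀ c : K, x ≠ c • y) :
    ∃ u : Fin m → K, (∑ t, u t * y t) = 0 ∧ (∑ t, u t * x t) = 1 := by
  classical
  obtain ⟨s, hys⟩ : ∃ s, y s ≠ 0 := Function.ne_iff.mp hy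
  set z : Fin m → K := fun t => x t - x s / y s * y t with hz_def
  have hz : z ≠ 0 := by
    intro hz0
    refine h (x s / y s) (funext fun t => ?_)
    have := congrFun hz0 t
    simp only [hz_def, Pi.zero_apply, sub_eq_zero] at this
    simpa using this
  obtain ⟨t, hzt⟩ : ∃ t, z t ≠ 0 := Function.ne_iff.mp hz
  have hts : t ≠ s := by
    intro hts; apply hzt; rw [hts]
    simp only [hz_def]
    field_simp
    ring
  set u : Fin m → K := fun t' =>
    if t' = t then (z t)⁻¹ else if t' = s then -(z t)⁻¹ * (y t / y s) else 0 with hu_def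
  have key : ∀ w : Fin m → K,
      ∑ t', u t' * w t' = (z t)⁻¹ * w t - (z t)⁻¹ * (y t / y s) * w s := by
    intro w
    rw [← Finset.sum_subset (Finset.subset_univ ({t, s} : Finset (Fin m)))
      (fun v _ hv => ?_)]
    · rw [Finset.sum_pair hts]
      simp only [hu_def, if_pos rfl, if_neg hts, Ne.symm hts, if_true, if_false]
      ring
    · simp only [Finset.mem_insert, Finset.mem_singleton, not_or] at hv
      simp [hu_def, hv.1, hv.2]
  refine ⟨u, ?_, ?_⟩
  · rw [key y]
    field_simp
    ring
  · have hzz : x t - y t / y s * x s = z t := by rw [hz_def]; ring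
    rw [key x, show (z t)⁻¹ * x t - (z t)⁻¹ * (y t / y s) * x s
      = (z t)⁻¹ * (x t - y t / y s * x s) by ring, hzz, inv_mul_cancel₀ hzt]


theorem exists_assignment {k r : ℕ} (hr3 : 3 ≤ r) {n : Fin k → ℕ}
    (S : Fin r → (i : Fin k) → Fin (n i + 1) → K) (hS0 : ∀ a i, S a i ≠ 0)
    (hSd : ∀ a b, a ≠ b → ∃ i, ∀ c : K, S a i ≠ c • S b i)
    (i ℓ : Fin k) (hiℓ : i ≠ ℓ)
    (hbigi : ∃ a b : Fin r, ∀ c : K, S a i ≠ c • S b i)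
    (hbigℓ : ∃ a b : Fin r, ∀ c : K, S a ℓ ≠ c • S b ℓ)
    (a : Fin r) :
    ∃ f : Fin r → Fin k, (∀ b, b ≠ a → ∀ c : K, S a (f b) ≠ c • S b (f b)) ∧
      ∀ j, ((Finset.univ.erase a).filter (fun b => f b = j)).card ≤ r - 2 := by
  classical
  haveI : Nontrivial (Fin r) := Fin.nontrivial_iff_two_le.mpr (by omega)
  set P : Fin r → Fin k → Prop := fun b j => ∀ c : K, S a j ≠ c • S b j with hP
  -- main: any P-compatible f that is nonconstant away from a works
  have main : ∀ f : Fin r → Fin k, (∀ b, b ≠ a → P b (f b)) →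
      (∃ b1 b2, b1 ≠ a ∧ b2 ≠ a ∧ f b1 ≠ f b2) →
      ∃ f : Fin r → Fin k, (∀ b, b ≠ a → ∀ c : K, S a (f b) ≠ c • S b (f b)) ∧
        ∀ j, ((Finset.univ.erase a).filter (fun b => f b = j)).card ≤ r - 2 := by
    intro f hf ⟨b1, b2, hb1, hb2, hne⟩
    refine ⟨f, hf, fun j => ?_⟩
    by_contra hcard
    push_neg at hcard
    have hsub : (Finset.univ.erase a).filter (fun b => f b = j) ⊆ Finset.univ.erase a :=
      Finset.filter_subset _ _
    have hcard2 : (Finset.univ.erase a).card = r - 1 := by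
      rw [Finset.card_erase_of_mem (Finset.mem_univ a), Finset.card_univ, Fintype.card_fin]
    have hle : ((Finset.univ.erase a).filter (fun b => f b = j)).card ≤ r - 1 :=
      hcard2 ▸ Finset.card_le_card hsub
    have heq : (Finset.univ.erase a).filter (fun b => f b = j) = Finset.univ.erase a := by
      apply Finset.eq_of_subset_of_card_le hsub
      omega
    have h1 : f b1 = j := by
      have := heq ▸ (Finset.mem_erase.mpr ⟨hb1, Finset.mem_univ b1⟩)
      exact (Finset.mem_filter.mp this).2
    have h2 : f b2 = j := by
      have := heq ▸ (Finset.mem_erase.mpr ⟨hb2, Finset.mem_univ b2⟩)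
      exact (Finset.mem_filter.mp this).2
    exact hne (h1.trans h2.symm)
  set g : Fin r → Fin k := fun b =>
    if h : b = a then i else (hSd a b (fun he => h (he.symm))).choose with hg_def
  have hg : ∀ b, b ≠ a → P b (g b) := by
    intro b hb
    simp only [hg_def, dif_neg hb]
    exact (hSd a b (fun he => hb (he.symm))).choose_spec
  by_cases hcase : ∃ b1 b2, b1 ≠ a ∧ b2 ≠ a ∧ g b1 ≠ g b2
  · exact main g hg hcase
  push_neg at hcase
  obtain ⟨bstar, hbstar⟩ := exists_ne a
  set j0 : Fin k := g bstar with hj0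
  have hconst : ∀ b, b ≠ a → g b = j0 := fun b hb => hcase b bstar hb hbstar
  by_cases hcase2 : ∃ b0, b0 ≠ a ∧ ∃ j', j' ≠ j0 ∧ P b0 j'
  · obtain ⟨b0, hb0, j', hj', hPj'⟩ := hcase2
    refine main (Function.update g b0 j') (fun b hb => ?_) ?_
    · by_cases hbb : b = b0
      · subst hbb; rwa [Function.update_self]
      · rw [Function.update_of_ne hbb]; exact hg b hb
    · -- find b2 ≠ a, b2 ≠ b0
      have hcard : ((Finset.univ.erase a).erase b0).Nonempty := by
        rw [← Finset.card_pos, Finset.card_erase_of_mem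
          (Finset.mem_erase.mpr ⟨hb0, Finset.mem_univ b0⟩), Finset.card_erase_of_mem
          (Finset.mem_univ a), Finset.card_univ, Fintype.card_fin]
        omega
      obtain ⟨b2, hb2mem⟩ := hcard
      obtain ⟨hb2b0, hb2a'⟩ := Finset.mem_erase.mp hb2mem
      have hb2a : b2 ≠ a := (Finset.mem_erase.mp hb2a').1
      refine ⟨b0, b2, hb0, hb2a, ?_⟩
      rw [Function.update_self, Function.update_of_ne hb2b0, hconst b2 hb2a]
      exact hj'
  · push_neg at hcase2
    exfalso
    -- every b ≠ a is proportional to a in every block except j0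
    have hprop : ∀ (j1 : Fin k), j1 ≠ j0 → ∀ b, ∃ c : K, c ≠ 0 ∧ S b j1 = c • S a j1 := by
      intro j1 hj1 b
      by_cases hb : b = a
      · exact ⟨1, one_ne_zero, by rw [hb, one_smul]⟩
      · have hnP : ¬ P b j1 := hcase2 b hb j1 hj1
        simp only [hP, not_forall, not_ne_iff] at hnP
        obtain ⟨c, hc⟩ := hnP
        have hc0 : c ≠ 0 := by
          intro h0; rw [h0, zero_smul] at hc; exact hS0 a j1 hc
        refine ⟨c⁻¹, inv_ne_zero hc0, ?_⟩
        rw [hc, inv_smul_smul₀ hc0]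
    have key : ∀ (j1 : Fin k), j1 ≠ j0 →
        ∀ b1 b2 : Fin r, ∃ c : K, S b1 j1 = c • S b2 j1 := by
      intro j1 hj1 b1 b2
      obtain ⟨c1, hc1, e1⟩ := hprop j1 hj1 b1
      obtain ⟨c2, hc2, e2⟩ := hprop j1 hj1 b2
      refine ⟨c1 * c2⁻¹, ?_⟩
      rw [e1, e2, smul_smul]
      congr 1
      field_simp
    by_cases hj0i : j0 = i
    · obtain ⟨b1, b2, hb12⟩ := hbigℓ
      obtain ⟨c, hc⟩ := key ℓ (fun h => hiℓ (hj0i ▸ h).symm) b1 b2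
      exact hb12 c hc
    · obtain ⟨b1, b2, hb12⟩ := hbigi
      obtain ⟨c, hc⟩ := key i (fun h => hj0i h.symm) b1 b2
      exact hb12 c hc
/-- The reduced jet-evaluation map: value at each point plus the partial derivatives in the
directions complementary to `t0`. -/
noncomputable def theta (P : Fin r → ((i : Fin k) × Fin (n i + 1)) → K)
    (t0 : Fin r → (j : Fin k) → Fin (n j + 1)) :
    MvPolynomial ((i : Fin k) × Fin (n i + 1)) K →ₗ[K]
      ((Fin r × Option ((j : Fin k) × Fin (n j))) → K) :=
  LinearMap.pi fun c =>
    Option.rec ((aeval (P c.1)).toLinearMap)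
      (fun x => (aeval (P c.1)).toLinearMap ∘ₗ
        (pderiv (⟨x.1, (t0 c.1 x.1).succAbove x.2⟩ : (i : Fin k) × Fin (n i + 1))).toLinearMap)
      c.2

theorem theta_apply_none (P : Fin r → ((i : Fin k) × Fin (n i + 1)) → K)
    (t0 : Fin r → (j : Fin k) → Fin (n j + 1)) (F : MvPolynomial ((i : Fin k) × Fin (n i + 1)) K)
    (a : Fin r) : theta P t0 F (a, none) = aeval (P a) F := rfl

theorem theta_apply_some (P : Fin r → ((i : Fin k) × Fin (n i + 1)) → K)
    (t0 : Fin r → (j : Fin k) → Fin (n j + 1)) (F : MvPolynomial ((i : Fin k) × Fin (n i + 1)) K)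
    (a : Fin r) (j : Fin k) (s : Fin (n j)) :
    theta P t0 F (a, some ⟨j, s⟩) = aeval (P a) (pderiv ⟨j, (t0 a j).succAbove s⟩ F) := rfl

theorem theta_zero_iff [CharZero K] {d : Fin k → ℕ} (j₀ : Fin k) (hdj : d j₀ ≠ 0)
    (P : Fin r → ((i : Fin k) × Fin (n i + 1)) → K)
    (t0 : Fin r → (j : Fin k) → Fin (n j + 1))
    (ht0 : ∀ a j, P a ⟨j, t0 a j⟩ ≠ 0)
    {F : MvPolynomial ((i : Fin k) × Fin (n i + 1)) K}
    (hF : F ∈ weightedHomogeneousSubmodule K (wt k n) d) :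
    theta P t0 F = 0 ↔
      ∀ (a : Fin r) (v : (i : Fin k) × Fin (n i + 1)), aeval (P a) (pderiv v F) = 0 := by
  constructor
  · intro hz a v
    obtain ⟨j, t⟩ := v
    have hsome : ∀ t', t' ≠ t0 a j → aeval (P a) (pderiv ⟨j, t'⟩ F) = 0 := by
      intro t' ht'
      obtain ⟨s, hs⟩ := Fin.exists_succAbove_eq ht'
      have := congrFun hz (a, some ⟨j, s⟩)
      rwa [theta_apply_some, hs, Pi.zero_apply] at this
    by_cases ht : t = t0 a j
    · subst ht
      have heu := euler_aeval hF j (P a)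
      have hval : aeval (P a) F = 0 := by
        have := congrFun hz (a, none)
        rwa [theta_apply_none, Pi.zero_apply] at this
      rw [hval, mul_zero] at heu
      rw [Finset.sum_eq_single (t0 a j)] at heu
      · exact (mul_eq_zero.mp heu).resolve_left (ht0 a j)
      · intro t' _ ht'
        rw [hsome t' ht', mul_zero]
      · intro h
        exact absurd (Finset.mem_univ _) h
    · exact hsome t ht
  · intro hz
    funext c
    obtain ⟨a, o⟩ := c
    cases o with
    | none =>
      have heu := euler_aeval hF j₀ (P a)
      rw [Finset.sum_eq_zero (fun t' _ => by rw [hz a ⟨j₀, t'⟩, mul_zero])] at heu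
      have : (d j₀ : K) ≠ 0 := Nat.cast_ne_zero.mpr hdj
      rw [theta_apply_none, Pi.zero_apply]
      exact ((mul_eq_zero.mp heu.symm).resolve_left this)
    | some x =>
      obtain ⟨j, s⟩ := x
      rw [theta_apply_some, Pi.zero_apply]
      exact hz a _
theorem isWH_pow {w : ((i : Fin k) × Fin (n i + 1)) → (Fin k → ℕ)}
    {φ : MvPolynomial ((i : Fin k) × Fin (n i + 1)) K} {m : Fin k → ℕ}
    (h : φ.IsWeightedHomogeneous w m) (e : ℕ) : (φ ^ e).IsWeightedHomogeneous w (e • m) := by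
  have := IsWeightedHomogeneous.prod (Finset.range e) (fun _ => φ) (fun _ => m)
    (fun _ _ => h)
  simpa [Finset.prod_const, Finset.sum_const, Finset.card_range] using this

/-- helper: sum of a two-point-supported product -/
theorem sum_two_support {m : ℕ} {t s : Fin m} (hts : t ≠ s) (c1 c2 : K) (w : Fin m → K) :
    ∑ t', (if t' = t then c1 else if t' = s then c2 else 0) * w t' = c1 * w t + c2 * w s := by
  classical
  rw [← Finset.sum_subset (Finset.subset_univ ({t, s} : Finset (Fin m))) (fun v _ hv => ?_)]
  · rw [Finset.sum_pair hts]
    simp [hts, Ne.symm hts]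
  · simp only [Finset.mem_insert, Finset.mem_singleton, not_or] at hv
    simp [hv.1, hv.2]

theorem exists_generators {d : Fin k → ℕ}
    (S : Fin r → (i : Fin k) → Fin (n i + 1) → K)
    (hS0 : ∀ b j, S b j ≠ 0)
    (t0 : Fin r → (j : Fin k) → Fin (n j + 1))
    (ht0 : ∀ b j, S b j (t0 b j) ≠ 0)
    (f : Fin r → Fin k) (a : Fin r)
    (hfP : ∀ b, b ≠ a → ∀ c : K, S a (f b) ≠ c • S b (f b))
    (hE : ∀ j, 2 * ((Finset.univ.erase a).filter (fun b => f b = j)).card + 1 ≤ d j) :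
    (∀ (j : Fin k) (sb : Fin (n j)),
      ∃ F ∈ weightedHomogeneousSubmodule K (wt k n) d,
        theta (fun b v => S b v.1 v.2) t0 F = Pi.single (a, some ⟨j, sb⟩) (1 : K)) ∧
    (∃ F ∈ weightedHomogeneousSubmodule K (wt k n) d,
        theta (fun b v => S b v.1 v.2) t0 F (a, none) = 1 ∧
        ∀ a' o, a' ≠ a → theta (fun b v => S b v.1 v.2) t0 F (a', o) = 0) := by
  classical
  set Pt : Fin r → ((i : Fin k) × Fin (n i + 1)) → K := fun b v => S b v.1 v.2 with hPt
  -- separating functionals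
  have hUex : ∀ b, ∃ u : Fin (n (f b) + 1) → K,
      b ≠ a → (∑ t, u t * S b (f b) t) = 0 ∧ (∑ t, u t * S a (f b) t) = 1 := by
    intro b
    by_cases hb : b = a
    · exact ⟨0, fun h => absurd hb h⟩
    · obtain ⟨u, h1, h2⟩ := exists_dual_sep (S a (f b)) (S b (f b)) (hS0 b (f b)) (hfP b hb)
      exact ⟨u, fun _ => ⟨h1, h2⟩⟩
  choose U hU using hUex
  -- normalized coordinate functionals at a
  set Λ : (j : Fin k) → Fin (n j + 1) → K :=
    fun j => Pi.single (t0 a j) (S a j (t0 a j))⁻¹ with hΛ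
  have hΛ1 : ∀ j, (∑ t, Λ j t * S a j t) = 1 := by
    intro j
    rw [hΛ]
    have : ∀ t : Fin (n j + 1), (Pi.single (t0 a j) (S a j (t0 a j))⁻¹ : Fin (n j + 1) → K) t
          * S a j t
        = if t = t0 a j then (S a j (t0 a j))⁻¹ * S a j t else 0 := by
      intro t
      rcases eq_or_ne t (t0 a j) with h | h
      · subst h; simp
      · simp [Pi.single_apply, h]
    rw [Finset.sum_congr rfl (fun t _ => this t), Finset.sum_ite_eq' Finset.univ]
    simp [inv_mul_cancel₀ (ht0 a j)]
  -- the core product killing the other points doubly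
  set core : MvPolynomial ((i : Fin k) × Fin (n i + 1)) K :=
    ∏ b ∈ Finset.univ.erase a, (linF (f b) (U b)) ^ 2 with hcore
  set lam : (Fin k → ℕ) → MvPolynomial ((i : Fin k) × Fin (n i + 1)) K :=
    fun e => ∏ j', (linF j' (Λ j')) ^ (e j') with hlam
  set m : Fin k → ℕ := fun j => ((Finset.univ.erase a).filter (fun b => f b = j)).card with hm
  set E : Fin k → ℕ := fun j => d j - 2 * m j with hEdef
  -- membership bookkeeping
  have hmem : ∀ (e : Fin k → ℕ) (extra : MvPolynomial ((i : Fin k) × Fin (n i + 1)) K)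
      (Dex : Fin k → ℕ), extra ∈ weightedHomogeneousSubmodule K (wt k n) Dex →
      (∀ j, 2 * m j + e j + Dex j = d j) →
      core * lam e * extra ∈ weightedHomogeneousSubmodule K (wt k n) d := by
    intro e extra Dex hex hdeg
    have hcoremem : core.IsWeightedHomogeneous (wt k n)
        (∑ b ∈ Finset.univ.erase a, (2 • Pi.single (f b) 1 : Fin k → ℕ)) :=
      IsWeightedHomogeneous.prod _ _ _ (fun b _ => isWH_pow (linF_mem (f b) (U b)) 2)
    have hlammem : (lam e).IsWeightedHomogeneous (wt k n)
        (∑ j', (e j' • Pi.single j' 1 : Fin k → ℕ)) :=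
      IsWeightedHomogeneous.prod _ _ _ (fun j' _ => isWH_pow (linF_mem j' (Λ j')) (e j'))
    rw [mem_weightedHomogeneousSubmodule] at hex ⊢
    have htot := (hcoremem.mul hlammem).mul hex
    have : (∑ b ∈ Finset.univ.erase a, (2 • Pi.single (f b) 1 : Fin k → ℕ))
        + (∑ j', (e j' • Pi.single j' 1 : Fin k → ℕ)) + Dex = d := by
      funext j'
      have h1 : (∑ b ∈ Finset.univ.erase a, (2 • Pi.single (f b) 1 : Fin k → ℕ)) j'
          = 2 * m j' := by
        rw [Finset.sum_apply]
        have hterm : ∀ b ∈ Finset.univ.erase a,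
            (2 • Pi.single (f b) 1 : Fin k → ℕ) j' = if f b = j' then 2 else 0 := by
          intro b _
          rcases eq_or_ne (f b) j' with h | h
          · subst h; simp
          · simp [Pi.single_apply, Ne.symm h, h]
        rw [Finset.sum_congr rfl hterm, ← Finset.sum_filter, Finset.sum_const, smul_eq_mul,
          mul_comm]
      have h2 : (∑ j'', (e j'' • Pi.single j'' 1 : Fin k → ℕ)) j' = e j' := by
        rw [Finset.sum_apply]
        have hterm : ∀ j'' ∈ (Finset.univ : Finset (Fin k)),
            (e j'' • Pi.single j'' 1 : Fin k → ℕ) j' = if j'' = j' then e j'' else 0 := by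
          intro j'' _
          rcases eq_or_ne j'' j' with h | h
          · subst h; simp
          · simp [Pi.single_apply, Ne.symm h, h]
        rw [Finset.sum_congr rfl hterm, Finset.sum_ite_eq' Finset.univ]
        simp
      simp only [Pi.add_apply, h1, h2]
      exact hdeg j'
    rw [← this]
    exact htot
  -- vanishing at the other points
  have hvanish : ∀ (Q : MvPolynomial ((i : Fin k) × Fin (n i + 1)) K) (a' : Fin r), a' ≠ a →
      aeval (Pt a') (core * Q) = 0 ∧ ∀ v, aeval (Pt a') (pderiv v (core * Q)) = 0 := by
    intro Q a' ha'
    have hmem' : a' ∈ Finset.univ.erase a := Finset.mem_erase.mpr ⟨ha', Finset.mem_univ a'⟩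
    have hfact : core * Q = (linF (f a') (U a')) ^ 2 *
        ((∏ b ∈ (Finset.univ.erase a).erase a', (linF (f b) (U b)) ^ 2) * Q) := by
      rw [hcore, ← Finset.mul_prod_erase _ _ hmem', mul_assoc]
    have hL : aeval (Pt a') (linF (f a') (U a')) = 0 := by
      rw [aeval_linF]
      exact (hU a' ha').1
    rw [hfact]
    exact ⟨aeval_sq_mul hL, fun v => aeval_pderiv_sq_mul hL v⟩
  -- evaluation of core and lam at the point a
  have hvalcore : aeval (Pt a) core = 1 := by
    rw [hcore, map_prod]
    refine Finset.prod_eq_one fun b hb => ?_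
    rw [map_pow, aeval_linF]
    have h2 := (hU b (Finset.mem_erase.mp hb).1).2
    rw [show (∑ t, U b t * Pt a ⟨f b, t⟩) = ∑ t, U b t * S a (f b) t from rfl, h2, one_pow]
  have hvallam : ∀ e, aeval (Pt a) (lam e) = 1 := by
    intro e
    rw [hlam]
    simp only []
    rw [map_prod]
    refine Finset.prod_eq_one fun j' _ => ?_
    rw [map_pow, aeval_linF]
    rw [show (∑ t, Λ j' t * Pt a ⟨j', t⟩) = ∑ t, Λ j' t * S a j' t from rfl, hΛ1, one_pow]
  constructor
  · -- tangent generators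
    intro j sb
    set tv : Fin (n j + 1) := (t0 a j).succAbove sb with htv
    have htv0 : tv ≠ t0 a j := Fin.succAbove_ne _ _
    set mv : Fin (n j + 1) → K := fun t =>
      if t = tv then 1 else if t = t0 a j then -(S a j tv) / (S a j (t0 a j)) else 0 with hmv
    have hdot : (∑ t, mv t * S a j t) = 0 := by
      rw [hmv, sum_two_support htv0, one_mul, div_mul_cancel₀ _ (ht0 a j)]
      ring
    set E' : Fin k → ℕ := Function.update E j (E j - 1) with hE'
    refine ⟨core * lam E' * linF j mv, ?_, ?_⟩
    · refine hmem E' (linF j mv) (Pi.single j 1) (linF_mem j mv) fun j'' => ?_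
      have hcardE := hE j''
      have hm' : m j'' = ((Finset.univ.erase a).filter (fun b => f b = j'')).card := rfl
      have hE2 : E j'' = d j'' - 2 * m j'' := rfl
      rcases eq_or_ne j'' j with h | h
      · subst h
        rw [hE', Function.update_self]
        rw [Pi.single_apply, if_pos rfl]
        omega
      · rw [hE', Function.update_of_ne h]
        rw [Pi.single_apply, if_neg h]
        omega
    · funext c
      obtain ⟨a', o⟩ := c
      rcases eq_or_ne a' a with rfl | ha'
      · cases o with
        | none =>
          rw [theta_apply_none]
          have hM : aeval (Pt a') (linF j mv) = 0 := by
            rw [aeval_linF]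
            exact hdot
          rw [map_mul, hM, mul_zero]
          rw [Pi.single_apply, if_neg (by simp)]
        | some x =>
          obtain ⟨j'', s⟩ := x
          rw [theta_apply_some]
          have hM : aeval (Pt a') (linF j mv) = 0 := by
            rw [aeval_linF]; exact hdot
          rw [aeval_pderiv_mul_right hM]
          rw [map_mul, hvalcore, hvallam, one_mul, one_mul]
          rcases eq_or_ne j'' j with h | h
          · subst h
            rw [pderiv_linF_same, aeval_C]
            have hne : (t0 a' j'').succAbove s ≠ t0 a' j'' := Fin.succAbove_ne _ _
            rw [hmv]
            simp only []
            rw [Pi.single_apply]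
            by_cases hs : s = sb
            · subst hs
              rw [if_pos rfl, if_pos rfl]
              exact map_one _
            · rw [if_neg (by rw [htv, Fin.succAbove_right_inj]; exact hs),
                if_neg hne, if_neg (by simp [hs])]
              exact map_zero _
          · rw [pderiv_linF_ne _ _ _ h, map_zero]
            rw [Pi.single_apply, if_neg (by simp [h])]
      · have hv := hvanish (lam E' * linF j mv) a' ha'
        rw [mul_assoc]
        cases o with
        | none =>
          rw [theta_apply_none, hv.1, Pi.single_apply, if_neg (by simp [ha'])]
        | some x =>
          obtain ⟨j'', s⟩ := x
          rw [theta_apply_some, hv.2, Pi.single_apply, if_neg (by simp [ha'])]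
  · -- value generator
    refine ⟨core * lam E, ?_, ?_, ?_⟩
    · have hmemv := hmem E 1 0 (isWeightedHomogeneous_one K _) fun j'' => by
        have hcardE := hE j''
        have hm' : m j'' = ((Finset.univ.erase a).filter (fun b => f b = j'')).card := rfl
        have hE2 : E j'' = d j'' - 2 * m j'' := rfl
        simp only [Pi.zero_apply]
        omega
      rwa [mul_one] at hmemv
    · rw [theta_apply_none, map_mul, hvalcore, hvallam, one_mul]
    · intro a' o ha'
      have hv := hvanish (lam E) a' ha'
      cases o with
      | none => rw [theta_apply_none, hv.1]
      | some x =>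
        obtain ⟨j'', s⟩ := x
        rw [theta_apply_some, hv.2]

end SV2P

open MvPolynomial

set_option maxHeartbeats 1000000 in
set_option synthInstance.maxHeartbeats 200000 in
/-- **Two nontrivial projections inside `J` prevent Terracini membership.**
Let `r = min_i ⌈(d i + 2)/2⌉ ≥ 3` (note `⌈(d+2)/2⌉ = (d+3)/2` with integer division) and
`J = {i : ⌈(d i + 2)/2⌉ = r}`.  Let `S` be a set of `r` distinct points of
`ℙ^{n 1} × ⋯ × ℙ^{n k}`.  If there are two distinct indices `i, ℓ ∈ J` such that both
`π_i(S)` and `π_ℓ(S)` contain at least two distinct points, then the double points `2S` impose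
independent conditions in multidegree `d`, i.e. `ν(S) ∉ Ter_r(SV)`. -/
theorem sv_two_projections_in_J_not_terracini
    {K : Type} [Field K] [IsAlgClosed K] [CharZero K]
    (k : ℕ) (n d : Fin k → ℕ)
    (hn : ∀ i, 1 ≤ n i) (hd : ∀ i, 1 ≤ d i)
    (r : ℕ) (hr3 : 3 ≤ r)
    (hrle : ∀ i, r ≤ (d i + 3) / 2) (hrmem : ∃ i, (d i + 3) / 2 = r)
    (S : Fin r → (i : Fin k) → (Fin (n i + 1) → K))
    (hS0 : ∀ a i, S a i ≠ 0)
    (hSd : ∀ a b, a ≠ b → ∃ i, ∀ c : K, S a i ≠ c • S b i)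
    (i ℓ : Fin k) (hiℓ : i ≠ ℓ)
    (hi : (d i + 3) / 2 = r) (hℓ : (d ℓ + 3) / 2 = r)
    (hbigi : ∃ a b : Fin r, ∀ c : K, S a i ≠ c • S b i)
    (hbigℓ : ∃ a b : Fin r, ∀ c : K, S a ℓ ≠ c • S b ℓ) :
    Module.finrank K ↥(svDblVanish K k n d S) + r * ((∑ j, n j) + 1)
      = ∏ j, Nat.choose (n j + d j) (n j) := by
  classical
  have ht0ex : ∀ (a : Fin r) (j : Fin k), ∃ t, S a j t ≠ 0 :=
    fun a j => Function.ne_iff.mp (hS0 a j)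
  set t0 : Fin r → (j : Fin k) → Fin (n j + 1) := fun a j => (ht0ex a j).choose with ht0def
  have ht0 : ∀ a j, S a j (t0 a j) ≠ 0 := fun a j => (ht0ex a j).choose_spec
  set Pt : Fin r → ((i : Fin k) × Fin (n i + 1)) → K := fun b v => S b v.1 v.2 with hPtdef
  set Wr : Submodule K (MvPolynomial ((i : Fin k) × Fin (n i + 1)) K) :=
    restrictSupport K {μ | Finsupp.weight (SV2P.wt k n) μ = d} with hWrdef
  have hW : weightedHomogeneousSubmodule K
      (fun v : (i : Fin k) × Fin (n i + 1) => Pi.single v.1 1) d = Wr :=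
    SV2P.wh_eq_restrict d
  set Θ : Wr →ₗ[K] ((Fin r × Option ((j : Fin k) × Fin (n j))) → K) :=
    (SV2P.theta Pt t0) ∘ₗ Wr.subtype with hΘdef
  haveI : FiniteDimensional K Wr := SV2P.whFD d
  have hdi0 : d i ≠ 0 := by have := hd i; omega
  have hd2 : ∀ j, r * 2 ≤ d j + 3 := fun j => (Nat.le_div_iff_mul_le two_pos).mp (hrle j)
  have hker : ∀ (F : MvPolynomial ((i : Fin k) × Fin (n i + 1)) K), F ∈ Wr →
      (SV2P.theta Pt t0 F = 0 ↔
        ∀ (a : Fin r) (v : (i : Fin k) × Fin (n i + 1)), aeval (Pt a) (pderiv v F) = 0) := by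
    intro F hF
    exact SV2P.theta_zero_iff i hdi0 Pt t0 (fun a j => ht0 a j) (hW.ge hF)
  have hstep1 : svDblVanish K k n d S = Submodule.map Wr.subtype (LinearMap.ker Θ) := by
    ext F
    simp only [svDblVanish, Submodule.mem_inf, Submodule.mem_iInf, LinearMap.mem_ker,
      Submodule.mem_map, LinearMap.coe_comp, Function.comp_apply, AlgHom.toLinearMap_apply,
      Derivation.coeFn_coe]
    constructor
    · rintro ⟨h1, h2⟩
      have h1' : F ∈ Wr := hW.le h1
      refine ⟨⟨F, h1'⟩, ?_, rfl⟩
      rw [hΘdef]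
      show SV2P.theta Pt t0 F = 0
      exact (hker F h1').mpr fun a v => h2 a v
    · rintro ⟨⟨F', hF'⟩, hkF, rfl⟩
      have hkF' : SV2P.theta Pt t0 F' = 0 := hkF
      refine ⟨hW.ge hF', fun a v => ?_⟩
      exact (hker F' hF').mp hkF' a v
  have hsingle : ∀ c : Fin r × Option ((j : Fin k) × Fin (n j)),
      (Pi.single (M := fun _ : Fin r × Option ((j : Fin k) × Fin (n j)) => K) c (1 : K))
        ∈ LinearMap.range Θ := by
    rintro ⟨a, o⟩
    obtain ⟨f, hfP, hfcard⟩ := SV2P.exists_assignment hr3 S hS0 hSd i ℓ hiℓ hbigi hbigℓ a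
    have hE : ∀ j, 2 * ((Finset.univ.erase a).filter (fun b => f b = j)).card + 1 ≤ d j := by
      intro j
      have h1 := hfcard j
      have h2 := hd2 j
      omega
    obtain ⟨htan, hval⟩ := SV2P.exists_generators S hS0 t0 ht0 f a hfP hE
    have hmemR : ∀ (F : MvPolynomial ((i : Fin k) × Fin (n i + 1)) K),
        F ∈ weightedHomogeneousSubmodule K (SV2P.wt k n) d →
        SV2P.theta Pt t0 F ∈ LinearMap.range Θ := by
      intro F hF
      exact ⟨⟨F, (SV2P.wh_eq_restrict d).le hF⟩, rfl⟩
    cases o with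
    | some x =>
      obtain ⟨j, s⟩ := x
      obtain ⟨F, hFmem, hFeq⟩ := htan j s
      exact hFeq ▸ hmemR F hFmem
    | none =>
      obtain ⟨F0, hF0mem, hF0val, hF0van⟩ := hval
      have hsingles : ∀ x : (j : Fin k) × Fin (n j),
          (Pi.single (M := fun _ : Fin r × Option ((j : Fin k) × Fin (n j)) => K)
            (a, some x) (1 : K)) ∈ LinearMap.range Θ := by
        rintro ⟨j, s⟩
        obtain ⟨F, hFmem, hFeq⟩ := htan j s
        exact hFeq ▸ hmemR F hFmem
      have hdecomp : (Pi.single (M := fun _ : Fin r × Option ((j : Fin k) × Fin (n j)) => K)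
            (a, none) (1 : K))
          = SV2P.theta Pt t0 F0 - ∑ x : (j : Fin k) × Fin (n j),
              SV2P.theta Pt t0 F0 (a, some x) •
                (Pi.single (M := fun _ : Fin r × Option ((j : Fin k) × Fin (n j)) => K)
                  (a, some x) (1 : K)) := by
        funext c
        obtain ⟨a', o'⟩ := c
        rw [Pi.sub_apply, Finset.sum_apply]
        have hsum : (∑ x : (j : Fin k) × Fin (n j), (SV2P.theta Pt t0 F0 (a, some x) •
              (Pi.single (M := fun _ : Fin r × Option ((j : Fin k) × Fin (n j)) => K)
                (a, some x) (1 : K))) (a', o'))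
            = ∑ x : (j : Fin k) × Fin (n j), SV2P.theta Pt t0 F0 (a, some x) *
                (if ((a', o') : Fin r × Option ((j : Fin k) × Fin (n j))) = (a, some x)
                  then 1 else 0) := by
          refine Finset.sum_congr rfl fun x _ => ?_
          rw [Pi.smul_apply, Pi.single_apply, smul_eq_mul]
        rw [hsum]
        rcases eq_or_ne a' a with rfl | ha'
        · cases o' with
          | none =>
            rw [Pi.single_apply, if_pos rfl, hF0val]
            rw [Finset.sum_eq_zero (fun x _ => by rw [if_neg (by simp), mul_zero])]
            ring
          | some x0 =>
            rw [Pi.single_apply, if_neg (by simp)]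
            rw [Finset.sum_eq_single x0]
            · rw [if_pos rfl, mul_one]; ring
            · intro x _ hx
              rw [if_neg (by simp [hx.symm]), mul_zero]
            · intro h; exact absurd (Finset.mem_univ x0) h
        · rw [Pi.single_apply, if_neg (by simp [ha']), hF0van a' o' ha']
          rw [Finset.sum_eq_zero (fun x _ => by rw [if_neg (by simp [ha']), mul_zero])]
          ring
      rw [hdecomp]
      exact Submodule.sub_mem _ (hmemR F0 hF0mem)
        (Submodule.sum_mem _ fun x _ => Submodule.smul_mem _ _ (hsingles x))
  have hsurj : LinearMap.range Θ = ⊤ := by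
    rw [eq_top_iff, ← (Pi.basisFun K (Fin r × Option ((j : Fin k) × Fin (n j)))).span_eq,
      Submodule.span_le]
    rintro _ ⟨c, rfl⟩
    rw [Pi.basisFun_apply]
    exact hsingle c
  have hrn := LinearMap.finrank_range_add_finrank_ker Θ
  have hrange : Module.finrank K (LinearMap.range Θ) = r * ((∑ j, n j) + 1) := by
    rw [hsurj, finrank_top, Module.finrank_pi]
    rw [Fintype.card_prod, Fintype.card_fin, Fintype.card_option, Fintype.card_sigma]
    simp [Fintype.card_fin]
  have hkerrank : Module.finrank K ↥(svDblVanish K k n d S)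
      = Module.finrank K (LinearMap.ker Θ) := by
    rw [hstep1]
    exact (Submodule.equivMapOfInjective Wr.subtype (Submodule.injective_subtype Wr)
      (LinearMap.ker Θ)).symm.finrank_eq
  have hwr : Module.finrank K Wr = ∏ j, Nat.choose (n j + d j) (n j) := SV2P.finrank_wh d
  rw [hkerrank, ← hrange, ← hwr]
  omega
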